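/- Let r ≥ 2 be an integer. Then the determinant of the r×r real matrix whose k-th column is v_k (for k = 1,...,r) equals (−1)^{⌊r/2⌋} · ∏_{1 ≤ j < i ≤ r} (λ_i − λ_j). -/

import Mathlib

open Matrix Real BigOperators

noncomputable section

/-- `α_k = (2k - 1)π / (2r)`. -/
def alphaA (r k : ℕ) : ℝ := (2 * (k : ℝ) - 1) * Real.pi / (2 * (r : ℝ))

/-- `λ_k = 2 - 2 cos α_k`. -/
def lambdaA (r k : ℕ) : ℝ := 2 - 2 * Real.cos (alphaA r k)

/-- The vector `v_k` whose `j`-th entry (1-based `j`) is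
`(-1)^(r-j) * (1 + ∑_{i=1}^{r-j} 2 cos(i α_k))`; here 0-based indexing. -/
def vvec (r k : ℕ) : Fin r → ℝ :=
  fun j => (-1 : ℝ) ^ (r - 1 - (j : ℕ)) *
    (1 + ∑ i ∈ Finset.Icc 1 (r - 1 - (j : ℕ)), 2 * Real.cos ((i : ℝ) * alphaA r k))

/-! ### Auxiliary material -/

section Aux
open Polynomial Equiv Equiv.Perm

lemma units_eq_of_int' (a b : ℤˣ) (h : (a : ℤ) = b) : a = b := Units.ext h

open Equiv Equiv.Perm in
lemma rev_step_aux (n : ℕ) :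
    (Fin.revPerm : Equiv.Perm (Fin (n+1))) * finRotate (n+1) =
      (finSuccEquivLast.symm.permCongr (Fin.revPerm : Equiv.Perm (Fin n)).optionCongr) := by
  ext x
  induction x using Fin.lastCases with
  | last =>
    simp [finRotate_last, Equiv.permCongr_apply]
  | cast i =>
    have h1 : finRotate (n+1) (Fin.castSucc i) = (Fin.castSucc i) + 1 := finRotate_succ_apply _
    simp only [Equiv.Perm.mul_apply, h1, Equiv.permCongr_apply, Equiv.symm_symm,
      finSuccEquivLast_castSucc, Equiv.optionCongr_apply, Option.map_some,
      finSuccEquivLast_symm_some, Fin.revPerm_apply]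
    have hne : Fin.castSucc i ≠ Fin.last n := (Fin.castSucc_lt_last i).ne
    rw [Fin.val_rev, Fin.val_add_one, if_neg hne]
    simp [Fin.val_rev]

open Equiv Equiv.Perm in
lemma sign_revPerm_succ_aux (n : ℕ) :
    Equiv.Perm.sign (Fin.revPerm : Equiv.Perm (Fin (n+1))) =
      (-1)^n * Equiv.Perm.sign (Fin.revPerm : Equiv.Perm (Fin n)) := by
  have h := congrArg Equiv.Perm.sign (rev_step_aux n)
  rw [_root_.map_mul, sign_finRotate, Equiv.Perm.sign_permCongr, Equiv.optionCongr_sign] at h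
  have h2 : ((-1)^n : ℤˣ) * ((-1)^n : ℤˣ) = 1 := by
    apply units_eq_of_int'; push_cast
    rw [← pow_add]; exact Even.neg_one_pow ⟨n, rfl⟩
  rw [Nat.add_sub_cancel] at h
  rw [← h, mul_comm ((-1 : ℤˣ)^n) _, mul_assoc, h2, mul_one]

open Equiv Equiv.Perm in
lemma sign_revPerm_aux : ∀ n, Equiv.Perm.sign (Fin.revPerm : Equiv.Perm (Fin n)) = (-1)^(n/2)
  | 0 => by decide
  | 1 => by decide
  | (n+2) => by
    rw [sign_revPerm_succ_aux (n+1), sign_revPerm_succ_aux n, sign_revPerm_aux n]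
    have h : (n+2)/2 = n/2 + 1 := by omega
    rw [h, pow_succ, pow_succ]
    apply units_eq_of_int'
    have h1 : ((-1:ℤ))^(n*2) = 1 := by rw [mul_comm, pow_mul]; norm_num
    push_cast
    ring_nf
    rw [h1]
    ring

open Polynomial in
/-- The monic polynomials `q_m` with `q_m(2 - 2 cos θ) = (-1)^m D_m(θ)`. -/
noncomputable def qpoly : ℕ → Polynomial ℝ
  | 0 => 1
  | 1 => X - C 3
  | (m+2) => (X - C 2) * qpoly (m+1) - qpoly m

open Polynomial in
lemma qpoly_monic_deg : ∀ m, (qpoly m).Monic ∧ (qpoly m).natDegree = m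
  | 0 => ⟨monic_one, by simp [qpoly]⟩
  | 1 => ⟨monic_X_sub_C 3, by simp [qpoly]⟩
  | (m+2) => by
    obtain ⟨hm1, hd1⟩ := qpoly_monic_deg (m+1)
    obtain ⟨hm0, hd0⟩ := qpoly_monic_deg m
    have hmul : ((X - C 2 : ℝ[X]) * qpoly (m+1)).Monic := (monic_X_sub_C 2).mul hm1
    have hdmul : ((X - C 2 : ℝ[X]) * qpoly (m+1)).natDegree = m + 2 := by
      rw [(monic_X_sub_C (2:ℝ)).natDegree_mul hm1, natDegree_X_sub_C, hd1]; omega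
    have hlt : (qpoly m).degree < ((X - C 2 : ℝ[X]) * qpoly (m+1)).degree := by
      apply degree_lt_degree
      rw [hdmul, hd0]; omega
    refine ⟨hmul.sub_of_left hlt, ?_⟩
    show ((X - C 2) * qpoly (m+1) - qpoly m).natDegree = m + 2
    rw [natDegree_sub_eq_left_of_natDegree_lt, hdmul]
    rw [hdmul, hd0]; omega

/-- Dirichlet-type sums `D_m(θ)`. -/
noncomputable def DD (θ : ℝ) (m : ℕ) : ℝ := 1 + ∑ i ∈ Finset.Icc 1 m, 2 * Real.cos ((i:ℝ) * θ)

lemma DD_succ (θ : ℝ) (m : ℕ) : DD θ (m+1) = DD θ m + 2 * Real.cos (((m:ℝ)+1) * θ) := by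
  unfold DD
  rw [Finset.sum_Icc_succ_top (by omega : 1 ≤ m + 1)]
  push_cast; ring

lemma cos_rec_aux (θ : ℝ) (m : ℕ) :
    2 * Real.cos ((((m:ℝ))+2) * θ) = 2 * Real.cos θ * (2 * Real.cos (((m:ℝ)+1) * θ))
      - 2 * Real.cos ((m:ℝ) * θ) := by
  have h1 : ((m:ℝ)+2) * θ = ((m:ℝ)+1) * θ + θ := by ring
  have h2 : (m:ℝ) * θ = ((m:ℝ)+1) * θ - θ := by ring
  rw [h1, h2, Real.cos_add, Real.cos_sub]; ring

lemma D_rec (θ : ℝ) : ∀ m : ℕ, DD θ (m+2) = 2 * Real.cos θ * DD θ (m+1) - DD θ m := by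
  intro m
  induction m with
  | zero =>
    rw [DD_succ, DD_succ]
    have h0 : DD θ 0 = 1 := by simp [DD]
    rw [h0]
    push_cast
    have h2 : Real.cos ((1+1)*θ) = 2 * Real.cos θ ^ 2 - 1 := by
      rw [show ((1:ℝ)+1)*θ = 2*θ by ring, Real.cos_two_mul]
    rw [show ((0:ℝ)+1)*θ = θ by ring, h2]
    ring
  | succ k ih =>
    have A := DD_succ θ (k+2)
    have B := DD_succ θ (k+1)
    have C := DD_succ θ k
    have hc := cos_rec_aux θ (k+1)
    push_cast at A B C hc ⊢
    rw [show ((k:ℝ)+1+2) = ((k:ℝ)+2+1) by ring] at hc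
    linear_combination A + hc - (2*Real.cos θ) * B + ih + C

open Polynomial in
lemma qpoly_eval (θ : ℝ) : ∀ m, (qpoly m).eval (2 - 2 * Real.cos θ) = (-1)^m * DD θ m
  | 0 => by simp [qpoly, DD]
  | 1 => by
    show (X - C 3 : ℝ[X]).eval _ = _
    have h1 : DD θ 1 = 1 + 2 * Real.cos θ := by
      rw [show DD θ 1 = DD θ (0 + 1) from rfl, DD_succ]
      simp [DD]
    rw [h1]; simp; ring
  | (m+2) => by
    have h1 := qpoly_eval θ (m+1)
    have h0 := qpoly_eval θ m
    have hD := D_rec θ m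
    show (((X - C 2) * qpoly (m+1) - qpoly m)).eval (2 - 2*Real.cos θ) = _
    simp only [eval_sub, eval_mul, eval_X, eval_C, h1, h0]
    rw [hD, pow_succ, pow_succ]
    ring

lemma prod_pairs_aux {r : ℕ} (f : Fin r → Fin r → ℝ) :
    ∏ p ∈ Finset.univ.filter (fun p : Fin r × Fin r => p.1 < p.2), f p.1 p.2
      = ∏ i : Fin r, ∏ j ∈ Finset.Ioi i, f i j := by
  rw [Finset.prod_filter, ← Finset.univ_product_univ, Finset.prod_product]
  refine Finset.prod_congr rfl fun i _ => ?_
  rw [← Finset.prod_filter]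
  congr 1
  ext j
  simp [Finset.mem_Ioi]

end Aux

/-- The determinant of the matrix whose `k`-th column is `v_k` equals
`(-1)^⌊r/2⌋ · ∏_{j < i} (λ_i - λ_j)`. -/
theorem det_vvec_matrix (r : ℕ) (hr : 2 ≤ r) :
    (Matrix.of (fun (j k : Fin r) => vvec r ((k : ℕ) + 1) j)).det =
      (-1 : ℝ) ^ (r / 2) *
        ∏ p ∈ Finset.univ.filter (fun p : Fin r × Fin r => p.1 < p.2),
          (lambdaA r ((p.2 : ℕ) + 1) - lambdaA r ((p.1 : ℕ) + 1)) := by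
  set N : Matrix (Fin r) (Fin r) ℝ :=
    Matrix.of (fun (i k : Fin r) => (qpoly (i : ℕ)).eval (lambdaA r ((k : ℕ) + 1))) with hN
  have hM : (Matrix.of (fun (j k : Fin r) => vvec r ((k : ℕ) + 1) j))
      = N.submatrix Fin.rev id := by
    ext j k
    have hrev : ((Fin.rev j : Fin r) : ℕ) = r - 1 - (j : ℕ) := by
      rw [Fin.val_rev]; omega
    show vvec r ((k : ℕ) + 1) j = (qpoly ((Fin.rev j : Fin r) : ℕ)).eval (lambdaA r ((k : ℕ) + 1))
    rw [hrev, lambdaA, qpoly_eval]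
    simp [vvec, DD]
  have hsign : ((Equiv.Perm.sign (Fin.revPerm : Equiv.Perm (Fin r)) : ℤ) : ℝ)
      = (-1 : ℝ) ^ (r / 2) := by
    rw [sign_revPerm_aux r]
    push_cast
    ring
  have hrevperm : (Fin.rev : Fin r → Fin r) = (Fin.revPerm : Equiv.Perm (Fin r)) := rfl
  rw [hM, hrevperm, Matrix.det_permute, hsign]
  congr 1
  -- det N = Vandermonde product
  have hvdm := Matrix.det_eval_matrixOfPolynomials_eq_det_vandermonde
    (fun i : Fin r => lambdaA r ((i : ℕ) + 1)) (fun j : Fin r => qpoly (j : ℕ))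
    (fun i => (qpoly_monic_deg (i : ℕ)).2) (fun i => (qpoly_monic_deg (i : ℕ)).1)
  have hNT : N = (Matrix.of (fun (i j : Fin r) =>
      (qpoly ((j : ℕ))).eval (lambdaA r ((i : ℕ) + 1))))ᵀ := by
    ext i j; rfl
  rw [hNT, Matrix.det_transpose, ← hvdm, Matrix.det_vandermonde]
  exact (prod_pairs_aux (fun i j => lambdaA r ((j:ℕ)+1) - lambdaA r ((i:ℕ)+1))).symm
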